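/- Let A be a 2×2 integer matrix with determinant 1 and trace > 2, and let ℰ ⊆ 𝕋² be a periodic orbit of f_A. If there exists a positive (resp. negative) ℰ-rectangle whose increasing (resp. decreasing) diagonal has origin x for some x ∈ ℰ̃, then for every y ∈ ℰ̃ there exists a positive (resp. negative) ℰ-rectangle whose increasing (resp. decreasing) diagonal has origin y. -/
import Mathlib


/- Common setup: following the paper, we identify each subset of the torus
`𝕋² = ℝ²/ℤ²` with its (`ℤ²`-saturated) lift to `ℝ²`. -/

open Matrix Set
open scoped Pointwise

namespace Paper

/-- Points of the plane ℝ². -/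
abbrev V : Type := Fin 2 → ℝ

/-- The integer lattice ℤ² ⊆ ℝ². -/
def lattice : Set V := Set.range fun m : Fin 2 → ℤ => fun i => (m i : ℝ)

/-- The linear action of an integer matrix on ℝ². -/
def actR (A : Matrix (Fin 2) (Fin 2) ℤ) (v : V) : V :=
  (A.map (Int.cast : ℤ → ℝ)).mulVec v

/-- `E ⊆ ℝ²` is the lift of a finite subset of the torus. -/
def IsTorusFinite (E : Set V) : Prop := ∃ F : Set V, F.Finite ∧ E = F + lattice

/-- `E` is the lift of an `f_A`-invariant subset of the torus. -/
def IsInvariant (A : Matrix (Fin 2) (Fin 2) ℤ) (E : Set V) : Prop := actR A '' E = E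

/-- `E` is the lift of a periodic orbit of `f_A`. -/
def IsPeriodicOrbit (A : Matrix (Fin 2) (Fin 2) ℤ) (E : Set V) : Prop :=
  ∃ x : V, ∃ p : ℕ, 0 < p ∧ (actR A)^[p] x - x ∈ lattice ∧
    E = {v | ∃ i : ℕ, v - (actR A)^[i] x ∈ lattice}

/-- A rectangle `R(p; s, u)`, recorded via its basepoint `p` and its side
lengths `s, u > 0` (in the directions of the fixed eigenvectors `v^s, v^u`). -/
structure Rect where
  p : V
  s : ℝ
  u : ℝ
  s_pos : 0 < s
  u_pos : 0 < u

namespace Rect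

/-- The set of points of the rectangle `R(p;s,u)`. -/
def carrier (vs vu : V) (R : Rect) : Set V :=
  {q | ∃ a b : ℝ, 0 ≤ a ∧ a ≤ R.s ∧ 0 ≤ b ∧ b ≤ R.u ∧ q = R.p + a • vs + b • vu}

/-- Endpoint of the increasing diagonal (whose origin is `R.p`). -/
def incEnd (vs vu : V) (R : Rect) : V := R.p + R.s • vs + R.u • vu

/-- Origin of the decreasing diagonal. -/
def decOrigin (vs : V) (R : Rect) : V := R.p + R.s • vs

/-- Endpoint of the decreasing diagonal. -/
def decEnd (vu : V) (R : Rect) : V := R.p + R.u • vu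

/-- `R` is a positive `E`-rectangle. -/
def IsPos (vs vu : V) (E : Set V) (R : Rect) : Prop :=
  R.p ∈ E ∧ R.incEnd vs vu ∈ E

/-- `R` is a negative `E`-rectangle. -/
def IsNeg (vs vu : V) (E : Set V) (R : Rect) : Prop :=
  R.decOrigin vs ∈ E ∧ R.decEnd vu ∈ E

/-- `R` is a primitive positive `E`-rectangle. -/
def IsPrimPos (vs vu : V) (E : Set V) (R : Rect) : Prop :=
  R.IsPos vs vu E ∧ R.carrier vs vu ∩ E = {R.p, R.incEnd vs vu}

/-- `R` is a primitive negative `E`-rectangle. -/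
def IsPrimNeg (vs vu : V) (E : Set V) (R : Rect) : Prop :=
  R.IsNeg vs vu E ∧ R.carrier vs vu ∩ E = {R.decOrigin vs, R.decEnd vu}

/-- Bottom stable side of a rectangle. -/
def botSide (vs : V) (R : Rect) : Set V :=
  {q | ∃ a : ℝ, 0 ≤ a ∧ a ≤ R.s ∧ q = R.p + a • vs}

/-- Top stable side of a rectangle. -/
def topSide (vs vu : V) (R : Rect) : Set V :=
  {q | ∃ a : ℝ, 0 ≤ a ∧ a ≤ R.s ∧ q = R.p + a • vs + R.u • vu}

/-- Left unstable side of a rectangle. -/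
def leftSide (vu : V) (R : Rect) : Set V :=
  {q | ∃ b : ℝ, 0 ≤ b ∧ b ≤ R.u ∧ q = R.p + b • vu}

/-- Interior of a rectangle. -/
def interior (vs vu : V) (R : Rect) : Set V :=
  {q | ∃ a b : ℝ, 0 < a ∧ a < R.s ∧ 0 < b ∧ b < R.u ∧ q = R.p + a • vs + b • vu}

end Rect

/-- The (closed) quadrant `C₊₊(x)`. -/
def quadPP (vs vu x : V) : Set V :=
  {q | ∃ a b : ℝ, 0 ≤ a ∧ 0 ≤ b ∧ q = x + a • vs + b • vu}

/-- `D` is a right horizontal subrectangle of `R`. -/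
def IsRightHorizSub (vs : V) (D R : Rect) : Prop :=
  D.s ≤ R.s ∧ D.u = R.u ∧ D.p = R.p + (R.s - D.s) • vs

/-- A positive `X`-string with origin `x`: a sequence of positive `X`-rectangles,
the first one having `x` as origin of its increasing diagonal, consecutive ones
meeting exactly at one point which is the endpoint of the increasing diagonal of
the former and the origin of the increasing diagonal of the latter. -/
def IsPosString (vs vu : V) (X : Set V) (x : V) (R : ℕ → Rect) : Prop :=
  (∀ i, (R i).IsPos vs vu X) ∧ (R 0).p = x ∧
    ∀ i, (R i).carrier vs vu ∩ (R (i + 1)).carrier vs vu = {(R i).incEnd vs vu} ∧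
      (R (i + 1)).p = (R i).incEnd vs vu

/-- A positive `X`-staircase with origin `x`. -/
def IsPosStaircase (vs vu : V) (X : Set V) (x : V) (R : ℕ → Rect) : Prop :=
  (∀ i, (R i).carrier vs vu ⊆ quadPP vs vu x) ∧
    ∃ Del : ℕ → Rect, IsPosString vs vu X x Del ∧ R 0 = Del 0 ∧
      (∀ i, 1 ≤ i → IsRightHorizSub vs (Del i) (R i)) ∧
      (∀ i, (R i).topSide vs vu ⊆ (R (i + 1)).botSide vs) ∧
      ∃ C : ℝ, ∀ i, (Del (i + 1)).s / (Del i).s ≤ C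

/-- Stable side lengths of the primitive positive `(X, x)`-rectangles. -/
def baseLengths (vs vu : V) (X : Set V) (x : V) : Set ℝ :=
  {s | ∃ R : Rect, R.IsPrimPos vs vu X ∧ R.p = x ∧ R.s = s}

/-- The Euclidean norm of a point of ℝ². -/
noncomputable def euclNorm (v : V) : ℝ := Real.sqrt ((v 0) ^ 2 + (v 1) ^ 2)

/-- `Y` is the lift of an `ε`-dense subset of the torus, for the metric on the
torus induced by the Euclidean metric of ℝ². -/
def EDense (ε : ℝ) (Y : Set V) : Prop := ∀ v : V, ∃ y ∈ Y, euclNorm (v - y) ≤ ε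

/-- The lift of `{(0,1/2), (1/2,0), (1/2,1/2)}`, i.e. the set
`{(0,1/2), (1/2,0), (1/2,1/2)} + ℤ²`. -/
def halfPoints : Set V :=
  {v : V | ∃ w ∈ ({![0, 1/2], ![1/2, 0], ![1/2, 1/2]} : Set V), v - w ∈ lattice}

/-- The lift of the point `(1/2,1/2)` of the torus, i.e. `(1/2,1/2) + ℤ²`. -/
def halfCenter : Set V := {v : V | v - ![1/2, 1/2] ∈ lattice}

lemma actR_add (A : Matrix (Fin 2) (Fin 2) ℤ) (v w : V) :
    actR A (v + w) = actR A v + actR A w := Matrix.mulVec_add _ _ _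

lemma actR_smul (A : Matrix (Fin 2) (Fin 2) ℤ) (c : ℝ) (v : V) :
    actR A (c • v) = c • actR A v := Matrix.mulVec_smul _ _ _

lemma actR_sub (A : Matrix (Fin 2) (Fin 2) ℤ) (v w : V) :
    actR A (v - w) = actR A v - actR A w := by
  simp [actR, sub_eq_add_neg, Matrix.mulVec_add, Matrix.mulVec_neg]

lemma lattice_add' {m m' : V} (h : m ∈ lattice) (h' : m' ∈ lattice) : m + m' ∈ lattice := by
  obtain ⟨n, rfl⟩ := h; obtain ⟨n', rfl⟩ := h'
  exact ⟨n + n', by funext i; push_cast; simp⟩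

lemma lattice_sub' {m m' : V} (h : m ∈ lattice) (h' : m' ∈ lattice) : m - m' ∈ lattice := by
  obtain ⟨n, rfl⟩ := h; obtain ⟨n', rfl⟩ := h'
  exact ⟨n - n', by funext i; push_cast; simp⟩

lemma lattice_zero' : (0 : V) ∈ lattice :=
  ⟨0, by funext i; simp⟩

lemma actR_lattice (A : Matrix (Fin 2) (Fin 2) ℤ) {m : V} (hm : m ∈ lattice) :
    actR A m ∈ lattice := by
  obtain ⟨n, rfl⟩ := hm
  refine ⟨A.mulVec n, ?_⟩
  funext i
  simp [actR, Matrix.mulVec, dotProduct, Matrix.map_apply]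

lemma iter_lattice (A : Matrix (Fin 2) (Fin 2) ℤ) (k : ℕ) {m : V} (hm : m ∈ lattice) :
    (actR A)^[k] m ∈ lattice := by
  induction k with
  | zero => simpa using hm
  | succ n ih => rw [Function.iterate_succ_apply']; exact actR_lattice A ih

lemma iter_sub (A : Matrix (Fin 2) (Fin 2) ℤ) (k : ℕ) (v w : V) :
    (actR A)^[k] (v - w) = (actR A)^[k] v - (actR A)^[k] w := by
  induction k with
  | zero => simp
  | succ n ih => simp only [Function.iterate_succ_apply', ih, actR_sub]

lemma iter_point (A : Matrix (Fin 2) (Fin 2) ℤ) (lam : ℝ) (vs vu : V)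
    (hAs : actR A vs = lam⁻¹ • vs) (hAu : actR A vu = lam • vu) (k : ℕ) (q : V) (a b : ℝ) :
    (actR A)^[k] (q + a • vs + b • vu) =
      (actR A)^[k] q + (a * (lam⁻¹) ^ k) • vs + (b * lam ^ k) • vu := by
  induction k with
  | zero => simp
  | succ n ih =>
    rw [Function.iterate_succ_apply', ih, Function.iterate_succ_apply',
      actR_add, actR_add, actR_smul, actR_smul, hAs, hAu,
      smul_smul, smul_smul]
    ring_nf


/-- for a periodic orbit `ℰ`, if some positive (resp. negative)
`ℰ`-rectangle has the origin of its increasing (resp. decreasing) diagonal at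
some `x ∈ ℰ̃`, then every `y ∈ ℰ̃` is the origin of the increasing (resp.
decreasing) diagonal of some positive (resp. negative) `ℰ`-rectangle. -/
theorem statement_5 (A : Matrix (Fin 2) (Fin 2) ℤ) (hdet : A.det = 1) (htr : 2 < A.trace)
    (lam : ℝ) (hlam : 1 < lam) (vs vu : V) (hvs : vs ≠ 0) (hvu : vu ≠ 0)
    (hAs : actR A vs = lam⁻¹ • vs) (hAu : actR A vu = lam • vu)
    (E : Set V) (hE : IsPeriodicOrbit A E) :
    ((∃ x ∈ E, ∃ R : Rect, R.IsPos vs vu E ∧ R.p = x) →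
        ∀ y ∈ E, ∃ R : Rect, R.IsPos vs vu E ∧ R.p = y) ∧
    ((∃ x ∈ E, ∃ R : Rect, R.IsNeg vs vu E ∧ R.decOrigin vs = x) →
        ∀ y ∈ E, ∃ R : Rect, R.IsNeg vs vu E ∧ R.decOrigin vs = y) := by
  obtain ⟨x₀, per, hper_pos, hper, hEdef⟩ := hE
  have hlam0 : (0:ℝ) < lam := lt_trans one_pos hlam
  have hlaminv0 : (0:ℝ) < lam⁻¹ := inv_pos.mpr hlam0
  -- E is closed under adding lattice vectors
  have hElat : ∀ v ∈ E, ∀ m ∈ lattice, v + m ∈ E := by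
    intro v hv m hm
    rw [hEdef] at hv ⊢
    obtain ⟨i, hi⟩ := hv
    refine ⟨i, ?_⟩
    have : v + m - (actR A)^[i] x₀ = (v - (actR A)^[i] x₀) + m := by abel
    rw [this]
    exact lattice_add' hi hm
  -- E is closed under iterates of actR A
  have hEiter : ∀ k : ℕ, ∀ v ∈ E, (actR A)^[k] v ∈ E := by
    intro k v hv
    rw [hEdef] at hv ⊢
    obtain ⟨i, hi⟩ := hv
    refine ⟨k + i, ?_⟩
    rw [Function.iterate_add_apply]
    rw [← iter_sub]
    exact iter_lattice A k hi
  -- periodicity modulo the lattice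
  have hperiodic : ∀ n m : ℕ, (actR A)^[n + m * per] x₀ - (actR A)^[n] x₀ ∈ lattice := by
    intro n m
    induction m with
    | zero => simpa using lattice_zero'
    | succ j ih =>
      have h1 : n + (j + 1) * per = per + (n + j * per) := by ring
      have h2 : (actR A)^[n + (j+1) * per] x₀ - (actR A)^[n + j * per] x₀ ∈ lattice := by
        rw [h1, Function.iterate_add_apply]
        have h3 : (actR A)^[per] ((actR A)^[n + j * per] x₀) - (actR A)^[n + j * per] x₀
            = (actR A)^[n + j * per] ((actR A)^[per] x₀ - x₀) := by
          rw [iter_sub, ← Function.iterate_add_apply, ← Function.iterate_add_apply,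
            Nat.add_comm]
        rw [h3]
        exact iter_lattice A _ hper
      have h4 : (actR A)^[n + (j+1) * per] x₀ - (actR A)^[n] x₀ =
          ((actR A)^[n + (j+1) * per] x₀ - (actR A)^[n + j * per] x₀) +
            ((actR A)^[n + j * per] x₀ - (actR A)^[n] x₀) := by abel
      rw [h4]
      exact lattice_add' h2 ih
  -- key: for x, y ∈ E there is k with y - A^k x ∈ lattice
  have key : ∀ x ∈ E, ∀ y ∈ E, ∃ k : ℕ, y - (actR A)^[k] x ∈ lattice := by
    intro x hx y hy
    rw [hEdef] at hx hy
    obtain ⟨i, hi⟩ := hx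
    obtain ⟨j, hj⟩ := hy
    obtain ⟨p', rfl⟩ : ∃ p', per = p' + 1 := ⟨per - 1, by omega⟩
    refine ⟨j + i * p', ?_⟩
    have hk : (j + i * p') + i = j + i * (p' + 1) := by ring
    have h1 : (actR A)^[j + i * p'] x - (actR A)^[j + i * (p' + 1)] x₀ ∈ lattice := by
      have := iter_lattice A (j + i * p') hi
      rw [iter_sub, ← Function.iterate_add_apply, hk] at this
      exact this
    have h2 := hperiodic j i
    have heq : y - (actR A)^[j + i * p'] x =
        (y - (actR A)^[j] x₀) - ((actR A)^[j + i * (p'+1)] x₀ - (actR A)^[j] x₀)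
          - ((actR A)^[j + i * p'] x - (actR A)^[j + i * (p'+1)] x₀) := by abel
    rw [heq]
    exact lattice_sub' (lattice_sub' hj h2) h1
  constructor
  · rintro ⟨x, hx, R, ⟨hp, hend⟩, hRp⟩ y hy
    obtain ⟨k, hk⟩ := key x hx y hy
    refine ⟨⟨y, R.s * (lam⁻¹) ^ k, R.u * lam ^ k,
      mul_pos R.s_pos (pow_pos hlaminv0 k), mul_pos R.u_pos (pow_pos hlam0 k)⟩, ⟨hy, ?_⟩, rfl⟩
    have h1 : (actR A)^[k] (R.incEnd vs vu) ∈ E := hEiter k _ hend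
    have h2 : (actR A)^[k] (R.incEnd vs vu) =
        (actR A)^[k] R.p + (R.s * (lam⁻¹) ^ k) • vs + (R.u * lam ^ k) • vu :=
      iter_point A lam vs vu hAs hAu k R.p R.s R.u
    have h3 := hElat _ h1 _ hk
    have h4 : (actR A)^[k] (R.incEnd vs vu) + (y - (actR A)^[k] x) =
        y + (R.s * (lam⁻¹) ^ k) • vs + (R.u * lam ^ k) • vu := by
      rw [h2, hRp]; abel
    rw [h4] at h3
    exact h3
  · rintro ⟨x, hx, R, ⟨horig, hend⟩, hRdec⟩ y hy
    obtain ⟨k, hk⟩ := key x hx y hy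
    refine ⟨⟨y - (R.s * (lam⁻¹) ^ k) • vs, R.s * (lam⁻¹) ^ k, R.u * lam ^ k,
      mul_pos R.s_pos (pow_pos hlaminv0 k), mul_pos R.u_pos (pow_pos hlam0 k)⟩, ⟨?_, ?_⟩, ?_⟩
    · show y - (R.s * (lam⁻¹) ^ k) • vs + (R.s * (lam⁻¹) ^ k) • vs ∈ E
      have : y - (R.s * (lam⁻¹) ^ k) • vs + (R.s * (lam⁻¹) ^ k) • vs = y := by abel
      rwa [this]
    · show y - (R.s * (lam⁻¹) ^ k) • vs + (R.u * lam ^ k) • vu ∈ E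
      have h1 : (actR A)^[k] (R.decEnd vu) ∈ E := hEiter k _ hend
      have h3 := hElat _ h1 _ hk
      have h2 : (actR A)^[k] (R.decEnd vu) =
          (actR A)^[k] R.p + (0 * (lam⁻¹) ^ k) • vs + (R.u * lam ^ k) • vu := by
        have := iter_point A lam vs vu hAs hAu k R.p 0 R.u
        simp only [zero_mul, zero_smul, add_zero] at this ⊢
        rw [← this]; rfl
      have h5 : (actR A)^[k] x =
          (actR A)^[k] R.p + (R.s * (lam⁻¹) ^ k) • vs + (0 * lam ^ k) • vu := by
        have := iter_point A lam vs vu hAs hAu k R.p R.s 0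
        simp only [zero_mul, zero_smul, add_zero] at this ⊢
        rw [← this, ← hRdec]; rfl
      have h4 : (actR A)^[k] (R.decEnd vu) + (y - (actR A)^[k] x) =
          y - (R.s * (lam⁻¹) ^ k) • vs + (R.u * lam ^ k) • vu := by
        rw [h2, h5]; simp only [zero_mul, zero_smul, add_zero]; abel
      rwa [h4] at h3
    · show y - (R.s * (lam⁻¹) ^ k) • vs + (R.s * (lam⁻¹) ^ k) • vs = y
      abel

end Paper
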